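/- Let $a_1, a_2 > 0$, $m_2 > d_2 > 0$, $\lambda_2 = \frac{a_2 d_2}{m_2-d_2}$, and $y_M > 0$ with $\frac{a_2}{a_2+y_M}\lambda_2 > \frac{(1+a_1)^3}{4a_1}$. Then for all $x \in (0,1]$ and $y \in (0, y_M]$, $\frac{a_2}{a_2+y}(y - \lambda_2) + \frac{1+a_1}{a_1+x}(1-x)(a_1+x) - \frac{1+a_1}{a_1+x}y \le -\eta$ where $\eta = \frac{a_2}{a_2+y_M}\lambda_2 - \frac{(1+a_1)^3}{4a_1} > 0$. -/

import Mathlib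

theorem stmt_18 (a1 a2 d2 m2 yM : ℝ) (ha1 : 0 < a1) (ha2 : 0 < a2)
    (hd2 : 0 < d2) (hm2 : d2 < m2) (hyM : 0 < yM)
    (hcond : (1 + a1) ^ 3 / (4 * a1) < a2 / (a2 + yM) * (a2 * d2 / (m2 - d2))) :
    ∀ x y : ℝ, 0 < x → x ≤ 1 → 0 < y → y ≤ yM →
      a2 / (a2 + y) * (y - a2 * d2 / (m2 - d2)) +
        (1 + a1) / (a1 + x) * ((1 - x) * (a1 + x)) - (1 + a1) / (a1 + x) * y ≤
      -(a2 / (a2 + yM) * (a2 * d2 / (m2 - d2)) - (1 + a1) ^ 3 / (4 * a1)) := by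
  intro x y hx hx1 hy hyyM
  have hm : (0:ℝ) < m2 - d2 := by linarith
  have hlam : 0 < a2 * d2 / (m2 - d2) := by positivity
  have hay : (0:ℝ) < a2 + y := by linarith
  have hayM : (0:ℝ) < a2 + yM := by linarith
  have hax : (0:ℝ) < a1 + x := by linarith
  set l := a2 * d2 / (m2 - d2) with hl
  -- piece 1
  have h1 : a2 / (a2 + y) * y - (1 + a1) / (a1 + x) * y ≤ 0 := by
    have hA : a2 / (a2 + y) ≤ 1 := by
      rw [div_le_one hay]; linarith
    have hB : (1:ℝ) ≤ (1 + a1) / (a1 + x) := by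
      rw [le_div_iff₀ hax]; linarith
    nlinarith
  -- piece 2
  have h2 : (1 + a1) / (a1 + x) * ((1 - x) * (a1 + x)) ≤ (1 + a1) ^ 3 / (4 * a1) := by
    have heq : (1 + a1) / (a1 + x) * ((1 - x) * (a1 + x)) = (1 - x) * (1 + a1) := by
      field_simp
    rw [heq, le_div_iff₀ (by positivity : (0:ℝ) < 4 * a1)]
    nlinarith [sq_nonneg (1 - a1), sq_nonneg (1 + a1), mul_pos hx (by linarith : (0:ℝ) < 1 + a1)]
  -- piece 3
  have h3 : a2 / (a2 + yM) * l ≤ a2 / (a2 + y) * l := by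
    have : a2 / (a2 + yM) ≤ a2 / (a2 + y) :=
      div_le_div_of_nonneg_left ha2.le hay (by linarith)
    exact mul_le_mul_of_nonneg_right this hlam.le
  have hexp : a2 / (a2 + y) * (y - l) =
      a2 / (a2 + y) * y - a2 / (a2 + y) * l := by ring
  linarith
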